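/- If the left hand of a configuration C = p_r … p_s of g-2PATH is free, then −2r + s ≤ mft_{g-2PATH}(C) ≤ −r + s + max{−r, s}. -/

import Mathlib

open scoped Classical

/-- Two grid positions are adjacent iff their L1 distance is 1. -/
def gridAdj (p q : ℤ × ℤ) : Prop := |p.1 - q.1| + |p.2 - q.2| = 1

lemma gridAdj_symm {p q : ℤ × ℤ} (h : gridAdj p q) : gridAdj q p := by
  unfold gridAdj at h ⊢
  rw [abs_sub_comm q.1 p.1, abs_sub_comm q.2 p.2]
  exact h

lemma gridAdj_irrefl (p : ℤ × ℤ) : ¬ gridAdj p p := by simp [gridAdj]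

/-- The graph induced on a set `X` of grid positions. -/
def gridGraph (X : Set (ℤ × ℤ)) : SimpleGraph (ℤ × ℤ) where
  Adj p q := p ∈ X ∧ q ∈ X ∧ gridAdj p q
  symm := ⟨fun p q h => ⟨h.2.1, h.1, gridAdj_symm h.2.2⟩⟩
  loopless := ⟨fun p h => gridAdj_irrefl p h.2.2⟩

/-- Graph distance inside the set `X`. -/
noncomputable def gdist (X : Set (ℤ × ℤ)) (p q : ℤ × ℤ) : ℕ := (gridGraph X).dist p q

/-- The boundary condition of `p` in `X`: it records which of the four
neighbors of `p` lie in `X`. -/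
def bcond (X : Set (ℤ × ℤ)) (p : ℤ × ℤ) : Set (ℤ × ℤ) := {q ∈ X | gridAdj p q}

/-- The set `M(v, t, X)` of nodes `w` with `d(v_gen, w) + d(w, v) ≤ t`. -/
noncomputable def Mset (v : ℤ × ℤ) (t : ℕ) (X : Set (ℤ × ℤ)) : Set (ℤ × ℤ) :=
  {w ∈ X | gdist X (0, 0) w + gdist X w v ≤ t}

/-- The available information (local map) `ai(v, t, X)`; `none` plays the role of `Q`. -/
noncomputable def ai (v : ℤ × ℤ) (t : ℕ) (X : Set (ℤ × ℤ)) :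
    Option (ℕ × (ℤ × ℤ) × Set ((ℤ × ℤ) × Set (ℤ × ℤ))) :=
  if v ∈ X ∧ (gridGraph X).Reachable (0, 0) v ∧ gdist X (0, 0) v ≤ t then
    some (t, v, (fun w => (w, bcond X w)) '' Mset v t X)
  else none

/-- `X ≡'_{t,v} Y` : `v ∈ X ∩ Y` and `ai(v,t,X) = ai(v,t,Y) ≠ Q`. -/
def equivAt (t : ℕ) (v : ℤ × ℤ) (X Y : Set (ℤ × ℤ)) : Prop :=
  v ∈ X ∧ v ∈ Y ∧ ai v t X = ai v t Y ∧ ai v t X ≠ none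

/-- A configuration: a finite connected set of positions containing the origin. -/
def IsConfig (X : Set (ℤ × ℤ)) : Prop :=
  X.Finite ∧ (0, 0) ∈ X ∧ ∀ p ∈ X, ∀ q ∈ X, (gridGraph X).Reachable p q

/-- `Y` is a consistent extension of the subset `M` of `X`. -/
def ConsExt (X M Y : Set (ℤ × ℤ)) : Prop := M ⊆ Y ∧ ∀ w ∈ M, bcond X w = bcond Y w

/-- `p` restricted to the index interval `[r, s]` is a simple, non-self-touching
lattice path through the origin `p 0 = (0,0)` (a g-2PATH configuration). -/
def IsPathOn (p : ℤ → ℤ × ℤ) (r s : ℤ) : Prop :=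
  r ≤ 0 ∧ 0 ≤ s ∧ p 0 = (0, 0) ∧
    (∀ m, r ≤ m → m < s → gridAdj (p m) (p (m + 1))) ∧
    (∀ m n, r ≤ m → m ≤ s → r ≤ n → n ≤ s → p m = p n → m = n) ∧
    (∀ m n, r ≤ m → m + 2 ≤ n → n ≤ s → ¬ gridAdj (p m) (p n))

/-- A configuration of g-2PATH. -/
structure GPath2 where
  r : ℤ
  s : ℤ
  p : ℤ → ℤ × ℤ
  isPath : IsPathOn p r s

/-- The set of positions of the path. -/
def pathSet (C : GPath2) : Set (ℤ × ℤ) := C.p '' Set.Icc C.r C.s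

/-- The path obtained from the sub-path `p_i … p_j` of `C` by appending the
sequence `x0` on the left and `x1` on the right. -/
def extFun (C : GPath2) (i j : ℤ) (x0 x1 : List (ℤ × ℤ)) : ℤ → ℤ × ℤ := fun m =>
  if m < i then x0.getD (m - (i - x0.length)).toNat (0, 0)
  else if m ≤ j then C.p m
  else x1.getD (m - (j + 1)).toNat (0, 0)

/-- `(x0, x1)` is a pair of sequences of positions such that `x0 p_i … p_j x1`
is a configuration of g-2PATH that is a consistent extension of the sub-path
`p_i … p_j` of `C` (boundary conditions of `p_i … p_j` are preserved). -/
def IsExtPair (C : GPath2) (i j : ℤ) (x0 x1 : List (ℤ × ℤ)) : Prop :=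
  C.r ≤ i ∧ i ≤ 0 ∧ 0 ≤ j ∧ j ≤ C.s ∧
    IsPathOn (extFun C i j x0 x1) (i - x0.length) (j + x1.length) ∧
    ∀ m, i ≤ m → m ≤ j →
      bcond (pathSet C) (C.p m) =
        bcond (extFun C i j x0 x1 '' Set.Icc (i - (x0.length : ℤ)) (j + (x1.length : ℤ)))
          (C.p m)

def Wset (C : GPath2) (i j : ℤ) : Set (List (ℤ × ℤ) × List (ℤ × ℤ)) :=
  {w | IsExtPair C i j w.1 w.2}

def Uset (C : GPath2) (i j : ℤ) : Set (List (ℤ × ℤ)) := Prod.fst '' Wset C i j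

def Vset (C : GPath2) (i j : ℤ) : Set (List (ℤ × ℤ)) := Prod.snd '' Wset C i j

/-- `f(i,j)`: the supremum of lengths of consistent left extensions. -/
noncomputable def fval (C : GPath2) (i j : ℤ) : ENat := ⨆ x ∈ Uset C i j, (x.length : ENat)

/-- `g(i,j)`: the supremum of lengths of consistent right extensions. -/
noncomputable def gval (C : GPath2) (i j : ℤ) : ENat := ⨆ x ∈ Vset C i j, (x.length : ENat)

/-- `NI(i,j)` : `W(i,j) = U(i,j) × V(i,j)`. -/
def NI (C : GPath2) (i j : ℤ) : Prop := Wset C i j = Uset C i j ×ˢ Vset C i j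

def Kset (C : GPath2) : Set (ℤ × ℤ) :=
  {ij | C.r ≤ ij.1 ∧ ij.1 ≤ 0 ∧ 0 ≤ ij.2 ∧ ij.2 ≤ C.s ∧ (Wset C ij.1 ij.2).Finite}

def Iset (C : GPath2) : Set (ℤ × ℤ) :=
  {ij | C.r ≤ ij.1 - 1 ∧ ij.1 ≤ 0 ∧ 0 ≤ ij.2 ∧ ij.2 ≤ C.s ∧
    (Wset C ij.1 ij.2).Infinite ∧ (Wset C (ij.1 - 1) ij.2).Finite}

def Jset (C : GPath2) : Set (ℤ × ℤ) :=
  {ij | C.r ≤ ij.1 ∧ ij.1 ≤ 0 ∧ 0 ≤ ij.2 ∧ ij.2 + 1 ≤ C.s ∧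
    (Wset C ij.1 ij.2).Infinite ∧ (Wset C ij.1 (ij.2 + 1)).Finite}

/-- The condition of noninterference of extensions. -/
def CNI (C : GPath2) : Prop := ∀ ij ∈ Kset C ∪ Iset C ∪ Jset C, NI C ij.1 ij.2

/-- The radius of `X`: the largest distance from the origin within `X`. -/
noncomputable def rad (X : Set (ℤ × ℤ)) : ℕ := sSup {n | ∃ v ∈ X, gdist X (0, 0) v = n}

def EquivStep (t : ℕ) (C C' : GPath2) : Prop := ∃ v, equivAt t v (pathSet C) (pathSet C')

/-- `t` is safe for `C`: some chain `C ≡'_t C₁ ≡'_t … ≡'_t C'` ends in a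
configuration of radius `> t`. -/
def Safe (t : ℕ) (C : GPath2) : Prop :=
  ∃ C' : GPath2, Relation.ReflTransGen (EquivStep t) C C' ∧ t < rad (pathSet C')

/-- The minimum firing time of `C` for g-2PATH: the least unsafe time. -/
noncomputable def mft (C : GPath2) : ℕ := sInf {t | ¬ Safe t C}

/-- `T̃ = min_{r ≤ i ≤ 0 ≤ j ≤ s} max {−2i + j + g(i,j), 2j − i + f(i,j)}`. -/
noncomputable def Ttilde (C : GPath2) : ENat :=
  sInf {x : ENat | ∃ i j : ℤ, C.r ≤ i ∧ i ≤ 0 ∧ 0 ≤ j ∧ j ≤ C.s ∧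
    x = max (((-2 * i + j).toNat : ENat) + gval C i j)
            (((2 * j - i).toNat : ENat) + fval C i j)}

/-- The left hand `p_r … p_0` of `C` is free. -/
def FreeLeft (C : GPath2) : Prop := C.r = 0 ∨ (C.r < 0 ∧ fval C (C.r + 1) C.s = ⊤)

/-- The right hand `p_0 … p_s` of `C` is free. -/
def FreeRight (C : GPath2) : Prop := C.s = 0 ∨ (0 < C.s ∧ gval C C.r (C.s - 1) = ⊤)

section Aux
open SimpleGraph

variable (C : GPath2)

lemma hr0 : C.r ≤ 0 := C.isPath.1
lemma hs0 : 0 ≤ C.s := C.isPath.2.1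
lemma hp00 : C.p 0 = (0,0) := C.isPath.2.2.1

lemma mem_pathSet {m : ℤ} (h : m ∈ Set.Icc C.r C.s) : C.p m ∈ pathSet C :=
  Set.mem_image_of_mem _ h

lemma orig_mem : ((0,0) : ℤ × ℤ) ∈ pathSet C := by
  rw [← hp00 C]; exact mem_pathSet C ⟨hr0 C, hs0 C⟩

lemma idx_inj {a b : ℤ} (ha : a ∈ Set.Icc C.r C.s) (hb : b ∈ Set.Icc C.r C.s)
    (h : C.p a = C.p b) : a = b :=
  C.isPath.2.2.2.2.1 a b ha.1 ha.2 hb.1 hb.2 h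

lemma adj_abs {a b : ℤ} (ha : a ∈ Set.Icc C.r C.s) (hb : b ∈ Set.Icc C.r C.s)
    (h : gridAdj (C.p a) (C.p b)) : (a - b).natAbs = 1 := by
  rcases lt_trichotomy a b with hab | hab | hab
  · by_contra hne
    have h2 : a + 2 ≤ b := by omega
    exact C.isPath.2.2.2.2.2 a b ha.1 h2 hb.2 h
  · exact absurd (hab ▸ h) (gridAdj_irrefl _)
  · by_contra hne
    have h2 : b + 2 ≤ a := by omega
    exact C.isPath.2.2.2.2.2 b a hb.1 h2 ha.2 (gridAdj_symm h)

lemma adj_succ {a : ℤ} (h1 : C.r ≤ a) (h2 : a < C.s) :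
    (gridGraph (pathSet C)).Adj (C.p a) (C.p (a+1)) :=
  ⟨mem_pathSet C ⟨h1, le_of_lt h2⟩, mem_pathSet C ⟨by omega, by omega⟩,
    C.isPath.2.2.2.1 a h1 h2⟩

lemma walk_exists : ∀ n : ℕ, ∀ a : ℤ, C.r ≤ a → a + n ≤ C.s →
    ∃ w : (gridGraph (pathSet C)).Walk (C.p a) (C.p (a + n)), w.length = n := by
  intro n
  induction n with
  | zero => intro a h1 h2; exact ⟨(Walk.nil).copy rfl (by norm_num), by simp⟩
  | succ n ih =>
    intro a h1 h2
    have hadj : (gridGraph (pathSet C)).Adj (C.p a) (C.p (a+1)) :=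
      adj_succ C h1 (by push_cast at h2 ⊢; omega)
    obtain ⟨w, hw⟩ := ih (a+1) (by omega) (by push_cast at h2 ⊢; omega)
    refine ⟨(Walk.cons hadj w).copy rfl (by push_cast; ring_nf), by simp [hw]⟩

lemma reachable_pts {a b : ℤ} (ha : a ∈ Set.Icc C.r C.s) (hb : b ∈ Set.Icc C.r C.s) :
    (gridGraph (pathSet C)).Reachable (C.p a) (C.p b) := by
  obtain ⟨ha1, ha2⟩ := ha; obtain ⟨hb1, hb2⟩ := hb
  have ha : a ∈ Set.Icc C.r C.s := ⟨ha1, ha2⟩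
  have hb : b ∈ Set.Icc C.r C.s := ⟨hb1, hb2⟩
  rcases le_total a b with hab | hab
  · obtain ⟨w, _⟩ := walk_exists C (b - a).toNat a ha1 (by omega)
    have : a + ((b - a).toNat : ℤ) = b := by omega
    exact ⟨w.copy rfl (by rw [this])⟩
  · obtain ⟨w, _⟩ := walk_exists C (a - b).toNat b hb1 (by omega)
    have : b + ((a - b).toNat : ℤ) = a := by omega
    exact Reachable.symm ⟨w.copy rfl (by rw [this])⟩

lemma walk_lb : ∀ {u v : ℤ × ℤ} (w : (gridGraph (pathSet C)).Walk u v) (a b : ℤ),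
    a ∈ Set.Icc C.r C.s → b ∈ Set.Icc C.r C.s → C.p a = u → C.p b = v →
    (a - b).natAbs ≤ w.length := by
  intro u v w
  induction w with
  | nil =>
    intro a b ha hb hu hv
    have : a = b := idx_inj C ha hb (by rw [hu, hv])
    simp [this]
  | @cons u x v h p ih =>
    intro a b ha hb hu hv
    obtain ⟨c, hc, hcx⟩ := h.2.1
    have hadj : gridAdj (C.p a) (C.p c) := by rw [hu, hcx]; exact h.2.2
    have h1 : (a - c).natAbs = 1 := adj_abs C ha hc hadj
    have h2 : (c - b).natAbs ≤ p.length := ih c b hc hb hcx hv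
    simp only [Walk.length_cons]
    omega

lemma gdist_le {a b : ℤ} (ha : a ∈ Set.Icc C.r C.s) (hb : b ∈ Set.Icc C.r C.s) :
    gdist (pathSet C) (C.p a) (C.p b) ≤ (b - a).natAbs := by
  obtain ⟨ha1, ha2⟩ := ha; obtain ⟨hb1, hb2⟩ := hb
  rcases le_total a b with hab | hab
  · obtain ⟨w, hw⟩ := walk_exists C (b - a).toNat a ha1 (by omega)
    have he : a + ((b - a).toNat : ℤ) = b := by omega
    have := SimpleGraph.dist_le (w.copy rfl (by rw [he]))
    simp only [Walk.length_copy] at this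
    rw [hw] at this
    unfold gdist; omega
  · obtain ⟨w, hw⟩ := walk_exists C (a - b).toNat b hb1 (by omega)
    have he : b + ((a - b).toNat : ℤ) = a := by omega
    have := SimpleGraph.dist_le (w.copy rfl (by rw [he]))
    simp only [Walk.length_copy] at this
    rw [hw] at this
    unfold gdist
    rw [SimpleGraph.dist_comm]
    omega

lemma gdist_eq {a b : ℤ} (ha : a ∈ Set.Icc C.r C.s) (hb : b ∈ Set.Icc C.r C.s) :
    gdist (pathSet C) (C.p a) (C.p b) = (b - a).natAbs := by
  refine le_antisymm (gdist_le C ha hb) ?_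
  obtain ⟨w, hw⟩ := (reachable_pts C ha hb).exists_walk_length_eq_dist
  have := walk_lb C w a b ha hb rfl rfl
  unfold gdist
  omega

lemma gdist_orig {m : ℤ} (hm : m ∈ Set.Icc C.r C.s) :
    gdist (pathSet C) ((0,0)) (C.p m) = m.natAbs := by
  rw [← hp00 C, gdist_eq C ⟨hr0 C, hs0 C⟩ hm]
  omega

end Aux
section Aux2
open SimpleGraph

variable (C : GPath2)

lemma radset_bdd :
    ∀ n ∈ {n | ∃ v ∈ pathSet C, gdist (pathSet C) ((0,0)) v = n},
      n ≤ (max (-C.r) C.s).toNat := by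
  rintro n ⟨v, ⟨m, hm, rfl⟩, rfl⟩
  rw [gdist_orig C hm]
  obtain ⟨h1, h2⟩ := hm
  omega

lemma rad_le : rad (pathSet C) ≤ (max (-C.r) C.s).toNat := by
  unfold rad
  exact csSup_le ⟨0, (0,0), orig_mem C, SimpleGraph.dist_self⟩ (radset_bdd C)

lemma le_rad {m : ℤ} (hm : m ∈ Set.Icc C.r C.s) : m.natAbs ≤ rad (pathSet C) := by
  unfold rad
  refine le_csSup ⟨(max (-C.r) C.s).toNat, ?_⟩ ⟨C.p m, mem_pathSet C hm, gdist_orig C hm⟩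
  rintro n hn
  exact radset_bdd C n hn

lemma mem_Mset_iff {t : ℕ} {k : ℤ} (hk : k ∈ Set.Icc C.r C.s) {w : ℤ × ℤ} :
    w ∈ Mset (C.p k) t (pathSet C) ↔
      ∃ m ∈ Set.Icc C.r C.s, C.p m = w ∧ m.natAbs + (k - m).natAbs ≤ t := by
  constructor
  · rintro ⟨⟨m, hm, rfl⟩, hle⟩
    refine ⟨m, hm, rfl, ?_⟩
    rwa [gdist_orig C hm, gdist_eq C hm hk] at hle
  · rintro ⟨m, hm, rfl, hle⟩
    exact ⟨mem_pathSet C hm, by rwa [gdist_orig C hm, gdist_eq C hm hk]⟩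

/-- At time `TN`, the local map covers everything. -/
lemma Mset_eq_all {t : ℕ} (ht : (C.s - C.r + max (-C.r) C.s).toNat ≤ t)
    {v : ℤ × ℤ} (hv : v ∈ pathSet C) : Mset v t (pathSet C) = pathSet C := by
  obtain ⟨k, hk, rfl⟩ := hv
  apply Set.eq_of_subset_of_subset (fun w hw => hw.1)
  rintro w ⟨m, hm, rfl⟩
  rw [mem_Mset_iff C hk]
  refine ⟨m, hm, rfl, ?_⟩
  obtain ⟨h1, h2⟩ := hm; obtain ⟨h3, h4⟩ := hk
  have := le_max_left (-C.r) C.s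
  have := le_max_right (-C.r) C.s
  omega

lemma bcond_subset {X : Set (ℤ × ℤ)} {w : ℤ × ℤ} : bcond X w ⊆ X := fun _ h => h.1

lemma pathSet_closed_walk {Y : Set (ℤ × ℤ)}
    (hbc : ∀ z ∈ pathSet C, bcond Y z = bcond (pathSet C) z) :
    ∀ {u v : ℤ × ℤ} (_ : (gridGraph Y).Walk u v), u ∈ pathSet C → v ∈ pathSet C := by
  intro u v w
  induction w with
  | nil => exact id
  | @cons u x v h p ih =>
    intro hu
    have hx : x ∈ bcond Y u := ⟨h.2.1, h.2.2⟩
    rw [hbc u hu] at hx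
    exact ih hx.1

/-- one equivalence step at a late time preserves the set of positions -/
lemma equivStep_pathSet {t : ℕ} (ht : (C.s - C.r + max (-C.r) C.s).toNat ≤ t)
    (C1 C2 : GPath2) (h1 : pathSet C1 = pathSet C) (h : EquivStep t C1 C2) :
    pathSet C2 = pathSet C := by
  obtain ⟨v, hv1, hv2, hai, hne⟩ := h
  rw [h1] at hv1 hai hne
  -- unfold ai on both sides
  unfold ai at hai hne
  by_cases hc1 : v ∈ pathSet C ∧ (gridGraph (pathSet C)).Reachable (0, 0) v ∧
      gdist (pathSet C) (0, 0) v ≤ t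
  swap; · exact absurd (if_neg hc1) hne
  rw [if_pos hc1] at hai
  by_cases hc2 : v ∈ pathSet C2 ∧ (gridGraph (pathSet C2)).Reachable (0, 0) v ∧
      gdist (pathSet C2) (0, 0) v ≤ t
  swap; · rw [if_neg hc2] at hai; exact (Option.some_ne_none _ hai).elim
  rw [if_pos hc2] at hai
  have himg : (fun w => (w, bcond (pathSet C) w)) '' Mset v t (pathSet C) =
      (fun w => (w, bcond (pathSet C2) w)) '' Mset v t (pathSet C2) := by
    have := Option.some.inj hai
    exact (Prod.ext_iff.mp ((Prod.ext_iff.mp this).2)).2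
  rw [Mset_eq_all C ht hv1] at himg
  -- every w ∈ pathSet C is in pathSet C2 with same bcond
  have key : ∀ w ∈ pathSet C, w ∈ Mset v t (pathSet C2) ∧
      bcond (pathSet C2) w = bcond (pathSet C) w := by
    intro w hw
    have : (w, bcond (pathSet C) w) ∈
        (fun w => (w, bcond (pathSet C2) w)) '' Mset v t (pathSet C2) := by
      rw [← himg]; exact Set.mem_image_of_mem _ hw
    obtain ⟨w', hw', heq⟩ := this
    obtain ⟨he1, he2⟩ := Prod.ext_iff.mp heq
    simp only at he1 he2
    subst he1
    exact ⟨hw', he2⟩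
  have hXsub : pathSet C ⊆ pathSet C2 := fun w hw => (key w hw).1.1
  have hbc : ∀ z ∈ pathSet C, bcond (pathSet C2) z = bcond (pathSet C) z :=
    fun z hz => (key z hz).2
  apply Set.eq_of_subset_of_subset _ hXsub
  -- pathSet C2 ⊆ pathSet C via walks from v
  intro y hy
  obtain ⟨ky, hky, rfl⟩ := hy
  obtain ⟨kv, hkv, rfl⟩ := hv2
  obtain ⟨w⟩ := reachable_pts C2 hkv hky
  exact pathSet_closed_walk C hbc w hv1

lemma not_safe_TN : ¬ Safe (C.s - C.r + max (-C.r) C.s).toNat C := by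
  rintro ⟨C', hchain, hrad⟩
  have hall : ∀ D : GPath2,
      Relation.ReflTransGen (EquivStep (C.s - C.r + max (-C.r) C.s).toNat) C D →
      pathSet D = pathSet C := by
    intro D h
    induction h with
    | refl => rfl
    | tail _ step ih => exact equivStep_pathSet C le_rfl _ _ ih step
  have hps : pathSet C' = pathSet C := hall C' hchain
  rw [hps] at hrad
  have := rad_le C
  have h1 := hr0 C
  have h2 := hs0 C
  omega

end Aux2
section Aux3
open SimpleGraph

variable (C : GPath2)

lemma exists_long (i j : ℤ) (h : fval C i j = ⊤) (N : ℕ) :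
    ∃ x0 x1, IsExtPair C i j x0 x1 ∧ N < x0.length := by
  by_contra hcon
  push_neg at hcon
  have hle : fval C i j ≤ (N : ENat) := by
    unfold fval
    refine iSup₂_le ?_
    rintro x ⟨w, hw, rfl⟩
    exact Nat.cast_le.mpr (hcon w.1 w.2 hw)
  rw [h] at hle
  exact absurd hle (by simp)

lemma extFun_eq_mid (i j : ℤ) (x0 x1 : List (ℤ × ℤ)) {m : ℤ} (h1 : i ≤ m) (h2 : m ≤ j) :
    extFun C i j x0 x1 m = C.p m := by
  unfold extFun; rw [if_neg (not_lt.2 h1), if_pos h2]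

lemma ext_x1_nil (hrneg : C.r < 0) (hs2 : C.r + 2 ≤ C.s) {x0 x1 : List (ℤ × ℤ)}
    (hpair : IsExtPair C (C.r + 1) C.s x0 x1) : x1 = [] := by
  by_contra hne
  have hlen1 : 0 < x1.length := List.length_pos_iff.mpr hne
  obtain ⟨hi1, hi2, hj1, hj2, hP, hbc⟩ := hpair
  set P := extFun C (C.r + 1) C.s x0 x1 with hPdef
  have hadj : gridAdj (P C.s) (P (C.s + 1)) :=
    hP.2.2.2.1 C.s (by omega) (by omega)
  have hPs : P C.s = C.p C.s := extFun_eq_mid C _ _ _ _ (by omega) le_rfl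
  have hb := hbc C.s (by omega) le_rfl
  have hmem : P (C.s + 1) ∈
      P '' Set.Icc ((C.r + 1) - (x0.length : ℤ)) (C.s + (x1.length : ℤ)) :=
    Set.mem_image_of_mem _ ⟨by omega, by omega⟩
  have hin : P (C.s + 1) ∈ bcond (pathSet C) (C.p C.s) := by
    rw [hb]
    exact ⟨hmem, by rw [← hPs]; exact hadj⟩
  obtain ⟨⟨m, hm, hpm⟩, hadj2⟩ := hin
  rw [← hpm] at hadj2
  have hm1 : (C.s - m).natAbs = 1 := adj_abs C ⟨by omega, le_rfl⟩ hm hadj2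
  have hms : m = C.s - 1 := by obtain ⟨hma, hmb⟩ := hm; omega
  subst hms
  have hPs1 : P (C.s - 1) = C.p (C.s - 1) := extFun_eq_mid C _ _ _ _ (by omega) (by omega)
  have := hP.2.2.2.2.1 (C.s - 1) (C.s + 1) (by omega) (by omega) (by omega) (by omega)
    (hPs1.trans hpm)
  omega

lemma safe_big (hrneg : C.r < 0) (hs2 : C.r + 2 ≤ C.s)
    (hfval : fval C (C.r + 1) C.s = ⊤) (t : ℕ) (ht1 : C.s ≤ (t : ℤ))
    (ht2 : (t : ℤ) < -2 * C.r + C.s) : Safe t C := by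
  obtain ⟨x0, x1, hpair, hlen⟩ := exists_long C _ _ hfval t
  have hx1 : x1 = [] := ext_x1_nil C hrneg hs2 hpair
  subst hx1
  obtain ⟨hi1, hi2, hj1, hj2, hP0, hbc0⟩ := hpair
  have hP : IsPathOn (extFun C (C.r + 1) C.s x0 []) ((C.r + 1) - x0.length) C.s := by
    simpa using hP0
  set D : GPath2 := ⟨(C.r + 1) - x0.length, C.s, extFun C (C.r + 1) C.s x0 [], hP⟩ with hDdef
  have hDp : ∀ m : ℤ, C.r + 1 ≤ m → m ≤ C.s → D.p m = C.p m := fun m h1 h2 =>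
    extFun_eq_mid C _ _ _ _ h1 h2
  have hYset : pathSet D = extFun C (C.r + 1) C.s x0 [] ''
      Set.Icc ((C.r + 1) - (x0.length : ℤ)) (C.s + (([] : List (ℤ × ℤ)).length : ℤ)) := by
    show D.p '' Set.Icc D.r D.s = _
    simp [hDdef]
  have hbc : ∀ m, C.r + 1 ≤ m → m ≤ C.s →
      bcond (pathSet C) (C.p m) = bcond (pathSet D) (C.p m) := by
    intro m h1 h2; rw [hYset]; exact hbc0 m h1 h2
  have hsC : C.s ∈ Set.Icc C.r C.s := ⟨by omega, le_rfl⟩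
  have hsD : C.s ∈ Set.Icc D.r D.s := ⟨by show (C.r+1) - (x0.length:ℤ) ≤ C.s; omega, le_rfl⟩
  have hvD : D.p C.s = C.p C.s := hDp C.s (by omega) le_rfl
  -- the two local maps agree
  have hM : Mset (C.p C.s) t (pathSet C) = Mset (C.p C.s) t (pathSet D) := by
    apply Set.eq_of_subset_of_subset
    · intro w hw
      rw [mem_Mset_iff C hsC] at hw
      obtain ⟨m, hm, rfl, hcond⟩ := hw
      obtain ⟨hma, hmb⟩ := hm
      have hmr : C.r + 1 ≤ m := by omega
      rw [← hvD, mem_Mset_iff D hsD]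
      exact ⟨m, ⟨by show (C.r+1) - (x0.length:ℤ) ≤ m; omega, hmb⟩, hDp m hmr hmb, hcond⟩
    · intro w hw
      rw [← hvD, mem_Mset_iff D hsD] at hw
      obtain ⟨m, hm, rfl, hcond⟩ := hw
      obtain ⟨hma, hmb⟩ := hm
      have hmr : C.r + 1 ≤ m := by omega
      rw [mem_Mset_iff C hsC]
      exact ⟨m, ⟨by omega, hmb⟩, (hDp m hmr hmb).symm, hcond⟩
  have himg : (fun w => (w, bcond (pathSet C) w)) '' Mset (C.p C.s) t (pathSet C) =
      (fun w => (w, bcond (pathSet D) w)) '' Mset (C.p C.s) t (pathSet D) := by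
    rw [← hM]
    apply Set.image_congr
    intro w hw
    rw [mem_Mset_iff C hsC] at hw
    obtain ⟨m, hm, rfl, hcond⟩ := hw
    obtain ⟨hma, hmb⟩ := hm
    have hmr : C.r + 1 ≤ m := by omega
    rw [hbc m hmr hmb]
  have hcondX : C.p C.s ∈ pathSet C ∧
      (gridGraph (pathSet C)).Reachable (0, 0) (C.p C.s) ∧
      gdist (pathSet C) (0, 0) (C.p C.s) ≤ t := by
    refine ⟨mem_pathSet C hsC, ?_, ?_⟩
    · have := reachable_pts C ⟨hr0 C, hs0 C⟩ hsC
      rwa [hp00 C] at this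
    · rw [gdist_orig C hsC]; omega
  have hcondY : C.p C.s ∈ pathSet D ∧
      (gridGraph (pathSet D)).Reachable (0, 0) (C.p C.s) ∧
      gdist (pathSet D) (0, 0) (C.p C.s) ≤ t := by
    rw [← hvD]
    refine ⟨mem_pathSet D hsD, ?_, ?_⟩
    · have := reachable_pts D ⟨hr0 D, hs0 D⟩ hsD
      rwa [hp00 D] at this
    · rw [gdist_orig D hsD]; omega
  have hai : ai (C.p C.s) t (pathSet C) = ai (C.p C.s) t (pathSet D) := by
    unfold ai
    rw [if_pos hcondX, if_pos hcondY, himg]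
  have hstep : EquivStep t C D :=
    ⟨C.p C.s, hcondX.1, hcondY.1, hai, by unfold ai; rw [if_pos hcondX]; simp⟩
  refine ⟨D, Relation.ReflTransGen.single hstep, ?_⟩
  have hDrIcc : D.r ∈ Set.Icc D.r D.s := ⟨le_rfl, by show (C.r+1) - (x0.length:ℤ) ≤ C.s; omega⟩
  have := le_rad D hDrIcc
  have hDr : D.r = (C.r + 1) - (x0.length : ℤ) := rfl
  rw [hDr] at this
  omega

end Aux3
section Aux4
open SimpleGraph

variable (C : GPath2)

lemma Mset_one_origin (D : GPath2) :
    Mset ((0, 0) : ℤ × ℤ) 1 (pathSet D) = {((0, 0) : ℤ × ℤ)} := by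
  have h0 : (0 : ℤ) ∈ Set.Icc D.r D.s := ⟨hr0 D, hs0 D⟩
  apply Set.eq_of_subset_of_subset
  · intro w hw
    rw [← hp00 D, mem_Mset_iff D h0] at hw
    obtain ⟨m, hm, rfl, hcond⟩ := hw
    have : m = 0 := by omega
    subst this
    rw [hp00 D]; rfl
  · intro w hw
    rw [Set.mem_singleton_iff] at hw
    subst hw
    rw [← hp00 D, mem_Mset_iff D h0]
    exact ⟨0, h0, rfl, by simp⟩

lemma safe_edge (hre : C.r = -1) (hse : C.s = 0)
    (hfval : fval C (C.r + 1) C.s = ⊤) (t : ℕ) (ht1 : max (-C.r) C.s ≤ (t : ℤ))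
    (ht2 : (t : ℤ) < -2 * C.r + C.s) : Safe t C := by
  have ht : t = 1 := by rw [hre, hse] at ht1 ht2; norm_num at ht1 ht2; omega
  subst ht
  obtain ⟨x0, x1, hpair, hlen⟩ := exists_long C _ _ hfval 1
  obtain ⟨hi1, hi2, hj1, hj2, hP, hbc0⟩ := hpair
  set D : GPath2 := ⟨(C.r + 1) - x0.length, C.s + x1.length,
    extFun C (C.r + 1) C.s x0 x1, hP⟩ with hDdef
  have hbc : bcond (pathSet C) ((0, 0) : ℤ × ℤ) = bcond (pathSet D) ((0, 0) : ℤ × ℤ) := by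
    have := hbc0 0 (by omega) (by omega)
    rwa [hp00 C] at this
  have hcondX : ((0, 0) : ℤ × ℤ) ∈ pathSet C ∧
      (gridGraph (pathSet C)).Reachable (0, 0) (0, 0) ∧
      gdist (pathSet C) (0, 0) (0, 0) ≤ 1 :=
    ⟨orig_mem C, Reachable.refl _, by unfold gdist; rw [SimpleGraph.dist_self]; omega⟩
  have hcondY : ((0, 0) : ℤ × ℤ) ∈ pathSet D ∧
      (gridGraph (pathSet D)).Reachable (0, 0) (0, 0) ∧
      gdist (pathSet D) (0, 0) (0, 0) ≤ 1 :=
    ⟨orig_mem D, Reachable.refl _, by unfold gdist; rw [SimpleGraph.dist_self]; omega⟩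
  have hai : ai ((0, 0) : ℤ × ℤ) 1 (pathSet C) = ai ((0, 0) : ℤ × ℤ) 1 (pathSet D) := by
    unfold ai
    rw [if_pos hcondX, if_pos hcondY, Mset_one_origin C, Mset_one_origin D,
      Set.image_singleton, Set.image_singleton, hbc]
  have hstep : EquivStep 1 C D :=
    ⟨(0, 0), hcondX.1, hcondY.1, hai, by unfold ai; rw [if_pos hcondX]; simp⟩
  refine ⟨D, Relation.ReflTransGen.single hstep, ?_⟩
  have hDrIcc : D.r ∈ Set.Icc D.r D.s := ⟨le_rfl, (hr0 D).trans (hs0 D)⟩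
  have := le_rad D hDrIcc
  have hDr : D.r = (C.r + 1) - (x0.length : ℤ) := rfl
  rw [hDr] at this
  omega

lemma safe_all (hfree : FreeLeft C) (t : ℕ) (ht : (t : ℤ) < -2 * C.r + C.s) : Safe t C := by
  have h1 := hr0 C; have h2 := hs0 C
  rcases lt_or_ge (t : ℤ) (max (-C.r) C.s) with hlt | hge
  · refine ⟨C, Relation.ReflTransGen.refl, ?_⟩
    have hra := le_rad C (m := C.r) ⟨le_rfl, by omega⟩
    have hrb := le_rad C (m := C.s) ⟨by omega, le_rfl⟩
    rcases le_total (-C.r) C.s with h | h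
    · rw [max_eq_right h] at hlt; omega
    · rw [max_eq_left h] at hlt; omega
  · rcases hfree with hr | ⟨hrneg, hfval⟩
    · exfalso
      have hmax : max (-C.r) C.s = C.s := by
        rw [hr, neg_zero]; exact max_eq_right h2
      rw [hr] at ht
      rw [hmax] at hge
      omega
    · by_cases hcase : C.r + 2 ≤ C.s
      · refine safe_big C hrneg hcase hfval t ?_ ht
        exact le_trans (le_max_right (-C.r) C.s) hge
      · have hre : C.r = -1 ∧ C.s = 0 := by omega
        exact safe_edge C hre.1 hre.2 hfval t hge ht

end Aux4

theorem stmt9 (C : GPath2) (hfree : FreeLeft C) :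
    -2 * C.r + C.s ≤ (mft C : ℤ) ∧ (mft C : ℤ) ≤ -C.r + C.s + max (-C.r) C.s := by
  have h1 := hr0 C; have h2 := hs0 C
  have hmax1 := le_max_left (-C.r) C.s
  have hTN := not_safe_TN C
  have hub : mft C ≤ (C.s - C.r + max (-C.r) C.s).toNat := Nat.sInf_le hTN
  have hne : {t | ¬ Safe t C}.Nonempty := ⟨_, hTN⟩
  have hmem : ¬ Safe (mft C) C := Nat.sInf_mem hne
  constructor
  · by_contra h
    push_neg at h
    exact hmem (safe_all C hfree _ h)
  · have hcast := (Nat.cast_le (α := ℤ)).mpr hub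
    have heq : (((C.s - C.r + max (-C.r) C.s).toNat : ℕ) : ℤ) =
        C.s - C.r + max (-C.r) C.s := Int.toNat_of_nonneg (by omega)
    rw [heq] at hcast
    omega
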